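/- (Gradient-norm sum bound along SC-AdaNGD_1 iterates, smooth case.) Let H > 0, let f : ℝ^d → ℝ be differentiable, H-strongly convex and β-smooth with ‖∇f(x)‖ ≤ G for all x ∈ K, and suppose the global minimizer x* := argmin_{x ∈ ℝ^d} f(x) belongs to K. Let x_1, …, x_T be the SC-AdaNGD_k iterates with k = 1, with g_t := ∇f(x_t) ≠ 0 for all t = 1, …, T. Then Σ_{t=1}^T ‖g_t‖ ≤ (β/H) · G · (1 + log(Σ_{t=1}^T G/‖g_t‖)). -/

import Mathlib

lemma proj_contract {E : Type*} [NormedAddCommGroup E] [InnerProductSpace ℝ E]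
    {K : Set E} (hKconv : Convex ℝ K)
    (proj : E → E) (hmem : ∀ y, proj y ∈ K)
    (hmin : ∀ y, ∀ z ∈ K, ‖proj y - y‖ ≤ ‖z - y‖)
    (y z : E) (hz : z ∈ K) : ‖proj y - z‖ ≤ ‖y - z‖ := by
  set p := proj y with hp
  have hpK : p ∈ K := hmem y
  haveI : Nonempty K := ⟨⟨p, hpK⟩⟩
  have hinf : ‖y - p‖ = ⨅ w : K, ‖y - w‖ := by
    apply le_antisymm
    · apply le_ciInf
      intro w
      rw [norm_sub_rev, norm_sub_rev y (w : E)]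
      exact hmin y w w.2
    · exact ciInf_le ⟨0, by rintro r ⟨w, rfl⟩; exact norm_nonneg _⟩ (⟨p, hpK⟩ : K)
  have hchar := (norm_eq_iInf_iff_real_inner_le_zero hKconv hpK).mp hinf
  have h1 : (inner ℝ (y - p) (z - p) : ℝ) ≤ 0 := hchar z hz
  have hexp : ‖y - z‖ ^ 2 = ‖y - p‖ ^ 2 + 2 * (inner ℝ (y - p) (p - z) : ℝ) + ‖p - z‖ ^ 2 := by
    have h : y - z = (y - p) + (p - z) := by abel
    rw [h, norm_add_sq_real]
  have h2 : (0:ℝ) ≤ (inner ℝ (y - p) (p - z) : ℝ) := by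
    have h : p - z = -(z - p) := by abel
    rw [h, inner_neg_right]
    linarith
  nlinarith [norm_nonneg (p - z), norm_nonneg (y - z), norm_nonneg (y - p), sq_nonneg (‖y - z‖ - ‖p - z‖)]

lemma my_harmonic_le_one_add_log : ∀ T : ℕ, 1 ≤ T →
    ∑ t ∈ Finset.Icc 1 T, (1:ℝ)/(t:ℝ) ≤ 1 + Real.log T := by
  intro T hT
  induction T, hT using Nat.le_induction with
  | base => simp
  | succ n hn ih =>
    rw [Finset.sum_Icc_succ_top (by omega : 1 ≤ n + 1)]
    have h1 : (1:ℝ) ≤ n := by exact_mod_cast hn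
    have hlog : Real.log n + 1/((n:ℝ)+1) ≤ Real.log ((n:ℝ)+1) := by
      have hpos : (0:ℝ) < (n:ℝ)/((n:ℝ)+1) := by positivity
      have := Real.log_le_sub_one_of_pos hpos
      rw [Real.log_div (by linarith) (by positivity)] at this
      have he : (n:ℝ)/((n:ℝ)+1) - 1 = -(1/((n:ℝ)+1)) := by field_simp; ring
      linarith
    push_cast
    linarith

theorem sc_adangd_one_grad_sum_bound
    {d : ℕ} (T : ℕ) (hT : 1 ≤ T) (H G β : ℝ) (hH : 0 < H)
    (K : Set (EuclideanSpace ℝ (Fin d)))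
    (hKne : K.Nonempty) (hKcl : IsClosed K) (hKbdd : Bornology.IsBounded K)
    (hKconv : Convex ℝ K)
    (proj : EuclideanSpace ℝ (Fin d) → EuclideanSpace ℝ (Fin d))
    (hproj_mem : ∀ y, proj y ∈ K)
    (hproj_min : ∀ y, ∀ z ∈ K, ‖proj y - y‖ ≤ ‖z - y‖)
    (f : EuclideanSpace ℝ (Fin d) → ℝ)
    (hdiff : Differentiable ℝ f)
    (hsc : ∀ x y, f x + (inner ℝ (gradient f x) (y - x) : ℝ) + (H / 2) * ‖x - y‖ ^ 2 ≤ f y)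
    (hsmooth : ∀ x y, f y ≤ f x + (inner ℝ (gradient f x) (y - x) : ℝ) + (β / 2) * ‖x - y‖ ^ 2)
    (hG : ∀ x ∈ K, ‖gradient f x‖ ≤ G)
    (xstar : EuclideanSpace ℝ (Fin d)) (hxstarK : xstar ∈ K)
    (hmin : ∀ y, f xstar ≤ f y)
    (x : ℕ → EuclideanSpace ℝ (Fin d)) (g : ℕ → EuclideanSpace ℝ (Fin d)) (η : ℕ → ℝ)
    (hx1 : x 1 ∈ K)
    (hg : ∀ t, g t = gradient f (x t))
    (hgne : ∀ t ∈ Finset.Icc 1 T, g t ≠ 0)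
    (hη : ∀ t, η t = 1 / (H * ∑ τ ∈ Finset.Icc 1 t, (‖g τ‖)⁻¹))
    (hupd : ∀ t ∈ Finset.Icc 1 T, x (t + 1) = proj (x t - (η t / ‖g t‖) • g t))
    :
    ∑ t ∈ Finset.Icc 1 T, ‖g t‖ ≤
      (β / H) * G * (1 + Real.log (∑ t ∈ Finset.Icc 1 T, G / ‖g t‖)) := by
  -- basic positivity facts
  have h1T : (1 : ℕ) ∈ Finset.Icc 1 T := by simp [hT]
  have hg1 : g 1 ≠ 0 := hgne 1 h1T
  -- β ≥ H > 0
  have hβH : H ≤ β := by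
    have h1 := hsc (x 1) (x 1 + g 1)
    have h2 := hsmooth (x 1) (x 1 + g 1)
    have h3 : x 1 - (x 1 + g 1) = -(g 1) := by abel
    rw [h3] at h1 h2
    have h4 : (0:ℝ) < ‖g 1‖ := norm_pos_iff.mpr hg1
    have h5 : ‖-(g 1)‖ = ‖g 1‖ := norm_neg _
    rw [h5] at h1 h2
    nlinarith [pow_pos h4 2]
  have hβ : 0 < β := lt_of_lt_of_le hH hβH
  -- iterates stay in K
  have hxK : ∀ t, 1 ≤ t → t ≤ T → x t ∈ K := by
    intro t
    induction t with
    | zero => omega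
    | succ n ih =>
      intro h1 h2
      rcases Nat.eq_or_lt_of_le h1 with h | h
      · rwa [← h]
      · have hn1 : 1 ≤ n := by omega
        have hnT : n ≤ T := by omega
        rw [hupd n (by simp [hn1, hnT])]
        exact hproj_mem _
  have hgle : ∀ t ∈ Finset.Icc 1 T, ‖g t‖ ≤ G := by
    intro t ht
    rw [Finset.mem_Icc] at ht
    rw [hg t]
    exact hG _ (hxK t ht.1 ht.2)
  have hG0 : 0 < G := lt_of_lt_of_le (norm_pos_iff.mpr hg1) (hgle 1 h1T)
  -- step sizes
  set S : ℕ → ℝ := fun t => ∑ τ ∈ Finset.Icc 1 t, (‖g τ‖)⁻¹ with hS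
  set A : ℕ → ℝ := fun t => H * S t with hA
  have hgpos : ∀ t ∈ Finset.Icc 1 T, (0:ℝ) < ‖g t‖ := fun t ht => norm_pos_iff.mpr (hgne t ht)
  have hSpos : ∀ t, 1 ≤ t → t ≤ T → 0 < S t := by
    intro t h1 h2
    apply Finset.sum_pos'
    · intro i _; positivity
    · exact ⟨1, by simp [h1], by simpa using (hgpos 1 h1T)⟩
  have hApos : ∀ t, 1 ≤ t → t ≤ T → 0 < A t := fun t h1 h2 => mul_pos hH (hSpos t h1 h2)
  have hηS : ∀ t, η t = 1 / (H * S t) := fun t => hη t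
  have hηA : ∀ t ∈ Finset.Icc 1 T, η t * A t = 1 := by
    intro t ht
    rw [Finset.mem_Icc] at ht
    have h0 : A t ≠ 0 := ne_of_gt (hApos t ht.1 ht.2)
    rw [hηS t, show H * S t = A t from rfl]
    field_simp
  have hηpos : ∀ t ∈ Finset.Icc 1 T, 0 < η t := by
    intro t ht
    rw [Finset.mem_Icc] at ht
    have h0 := hApos t ht.1 ht.2
    rw [hηS t, show H * S t = A t from rfl]
    positivity
  have hAstep : ∀ n : ℕ, A (n + 1) = A n + H * ‖g (n+1)‖⁻¹ := by
    intro n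
    simp only [hA, hS]
    rw [Finset.sum_Icc_succ_top (by omega : 1 ≤ n + 1)]
    ring
  -- lower bound on the inner product
  have hlow : ∀ t ∈ Finset.Icc 1 T,
      ‖g t‖^2/(2*β) + H/2 * ‖x t - xstar‖^2 ≤ (inner ℝ (g t) (x t - xstar) : ℝ) := by
    intro t ht
    have hs := hsc (x t) xstar
    rw [← hg t] at hs
    have hi : (inner ℝ (g t) (xstar - x t) : ℝ) = -(inner ℝ (g t) (x t - xstar) : ℝ) := by
      rw [show xstar - x t = -(x t - xstar) from (neg_sub (x t) xstar).symm, inner_neg_right]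
    rw [hi] at hs
    have hq : ‖g t‖^2/(2*β) ≤ f (x t) - f xstar := by
      have h1 := hsmooth (x t) (x t - β⁻¹ • g t)
      have h2 := hmin (x t - β⁻¹ • g t)
      rw [← hg t] at h1
      have e1 : x t - β⁻¹ • g t - x t = -(β⁻¹ • g t) := by abel
      have e2 : x t - (x t - β⁻¹ • g t) = β⁻¹ • g t := by abel
      rw [e1, e2] at h1
      have e3 : (inner ℝ (g t) (-(β⁻¹ • g t)) : ℝ) = -(β⁻¹ * ‖g t‖^2) := by
        rw [inner_neg_right, real_inner_smul_right, real_inner_self_eq_norm_sq]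
      have e4 : ‖β⁻¹ • g t‖ = β⁻¹ * ‖g t‖ := by
        rw [norm_smul, Real.norm_eq_abs, abs_of_pos (inv_pos.mpr hβ)]
      rw [e3, e4] at h1
      have e5 : β⁻¹ * ‖g t‖^2 - β/2 * (β⁻¹ * ‖g t‖)^2 = ‖g t‖^2/(2*β) := by
        field_simp
        ring
      nlinarith
    linarith
  -- key per-step inequality
  have hstep : ∀ t ∈ Finset.Icc 1 T,
      ‖g t‖/β + A t * ‖x (t+1) - xstar‖^2 ≤
        η t + A t * ‖x t - xstar‖^2 - H * ‖g t‖⁻¹ * ‖x t - xstar‖^2 := by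
    intro t ht
    have hnpos : 0 < ‖g t‖ := hgpos t ht
    have hn0 : ‖g t‖ ≠ 0 := ne_of_gt hnpos
    have hepos : 0 < η t := hηpos t ht
    have hA1 : η t * A t = 1 := hηA t ht
    have hA0 : 0 < A t := by
      have htm := ht
      rw [Finset.mem_Icc] at htm
      exact hApos t htm.1 htm.2
    have hcontr : ‖x (t+1) - xstar‖ ≤ ‖(x t - (η t / ‖g t‖) • g t) - xstar‖ := by
      rw [hupd t ht]
      exact proj_contract hKconv proj hproj_mem hproj_min _ _ hxstarK
    have hsq : ‖x (t+1) - xstar‖^2 ≤ ‖(x t - (η t / ‖g t‖) • g t) - xstar‖^2 :=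
      pow_le_pow_left₀ (norm_nonneg _) hcontr 2
    have hexp : ‖(x t - (η t / ‖g t‖) • g t) - xstar‖^2
        = ‖x t - xstar‖^2 - 2 * (η t / ‖g t‖) * (inner ℝ (g t) (x t - xstar) : ℝ) + (η t)^2 := by
      have h : (x t - (η t / ‖g t‖) • g t) - xstar = (x t - xstar) - (η t / ‖g t‖) • g t := by
        abel
      rw [h, norm_sub_sq_real, real_inner_smul_right]
      have h2 : ‖(η t / ‖g t‖) • g t‖ = η t := by
        rw [norm_smul, Real.norm_eq_abs, abs_of_pos (by positivity : 0 < η t / ‖g t‖)]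
        field_simp
      rw [h2, real_inner_comm]
      ring
    have hip := hlow t ht
    have e2 : 2 * (η t / ‖g t‖) * (‖g t‖^2/(2*β) + H/2 * ‖x t - xstar‖^2)
        = η t * ‖g t‖/β + η t * (H * ‖g t‖⁻¹) * ‖x t - xstar‖^2 := by
      field_simp
    have e2' : η t * ‖g t‖/β + η t * (H * ‖g t‖⁻¹) * ‖x t - xstar‖^2
        ≤ 2 * (η t / ‖g t‖) * (inner ℝ (g t) (x t - xstar) : ℝ) := by
      have hmul := mul_le_mul_of_nonneg_left hip (by positivity : (0:ℝ) ≤ 2 * (η t / ‖g t‖))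
      linarith [e2 ▸ hmul]
    have e3 : ‖x (t+1) - xstar‖^2 ≤ ‖x t - xstar‖^2 - η t * ‖g t‖/β
        - η t * (H * ‖g t‖⁻¹) * ‖x t - xstar‖^2 + (η t)^2 := by
      have := hsq.trans hexp.le
      linarith
    have e4 : A t * (‖x t - xstar‖^2 - η t * ‖g t‖/β
        - η t * (H * ‖g t‖⁻¹) * ‖x t - xstar‖^2 + (η t)^2)
        = A t * ‖x t - xstar‖^2 - ‖g t‖/β - H * ‖g t‖⁻¹ * ‖x t - xstar‖^2 + η t := by
      linear_combination (η t - ‖g t‖/β - H * ‖g t‖⁻¹ * ‖x t - xstar‖^2) * hA1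
    have e5 := mul_le_mul_of_nonneg_left e3 (le_of_lt hA0)
    rw [e4] at e5
    linarith
  -- telescoping by induction
  have main : ∀ N, N ≤ T →
      ∑ t ∈ Finset.Icc 1 N, ‖g t‖/β ≤
        (∑ t ∈ Finset.Icc 1 N, η t) - A N * ‖x (N+1) - xstar‖^2 := by
    intro N
    induction N with
    | zero => intro _; simp [hA, hS]
    | succ n ih =>
      intro hle
      have ihn := ih (by omega)
      have hmem : n + 1 ∈ Finset.Icc 1 T := by simp; omega
      have hst := hstep (n+1) hmem
      rw [Finset.sum_Icc_succ_top (by omega : 1 ≤ n + 1),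
          Finset.sum_Icc_succ_top (by omega : 1 ≤ n + 1)]
      have hAs2 : A (n+1) * ‖x (n+1) - xstar‖^2
          = A n * ‖x (n+1) - xstar‖^2 + H * ‖g (n+1)‖⁻¹ * ‖x (n+1) - xstar‖^2 := by
        rw [hAstep n]; ring
      linarith [hst, ihn, hAs2]
  -- conclude Σ‖g‖ ≤ β Σ η
  have hAT : 0 ≤ A T * ‖x (T+1) - xstar‖^2 := by
    have := hApos T hT le_rfl
    positivity
  have hmainT := main T le_rfl
  have hsum1 : (∑ t ∈ Finset.Icc 1 T, ‖g t‖) ≤ (∑ t ∈ Finset.Icc 1 T, η t) * β := by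
    have h2 : (∑ t ∈ Finset.Icc 1 T, ‖g t‖) / β ≤ ∑ t ∈ Finset.Icc 1 T, η t := by
      rw [Finset.sum_div]
      linarith
    exact (div_le_iff₀ hβ).mp h2
  -- bound Σ η via harmonic numbers
  have hηbound : ∀ t ∈ Finset.Icc 1 T, η t ≤ G/H * (1/(t:ℝ)) := by
    intro t ht
    have htm := ht
    rw [Finset.mem_Icc] at htm
    have ht1 : (1:ℝ) ≤ (t:ℝ) := by exact_mod_cast htm.1
    have htpos : (0:ℝ) < (t:ℝ) := by linarith
    have hSl : (t:ℝ)/G ≤ S t := by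
      have hterm : ∀ τ ∈ Finset.Icc 1 t, (1:ℝ)/G ≤ ‖g τ‖⁻¹ := by
        intro τ hτ
        have hτT : τ ∈ Finset.Icc 1 T := by
          rw [Finset.mem_Icc] at hτ ⊢
          omega
        have hle2 := hgle τ hτT
        have hp := hgpos τ hτT
        rw [one_div]
        exact inv_anti₀ hp hle2
      calc (t:ℝ)/G = ∑ _τ ∈ Finset.Icc 1 t, (1:ℝ)/G := by
            rw [Finset.sum_const, Nat.card_Icc]
            simp
            ring
        _ ≤ S t := Finset.sum_le_sum hterm
    have hSp : 0 < S t := lt_of_lt_of_le (by positivity) hSl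
    have h2 : 1/(H * S t) ≤ 1/(H * ((t:ℝ)/G)) := by
      apply one_div_le_one_div_of_le (by positivity)
      exact mul_le_mul_of_nonneg_left hSl (le_of_lt hH)
    have h3 : 1/(H * ((t:ℝ)/G)) = G/H * (1/(t:ℝ)) := by
      field_simp
    calc η t = 1/(H * S t) := hηS t
      _ ≤ 1/(H * ((t:ℝ)/G)) := h2
      _ = G/H * (1/(t:ℝ)) := h3
  have hηsum : ∑ t ∈ Finset.Icc 1 T, η t ≤ G/H * (1 + Real.log T) := by
    calc ∑ t ∈ Finset.Icc 1 T, η t ≤ ∑ t ∈ Finset.Icc 1 T, G/H * (1/(t:ℝ)) :=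
          Finset.sum_le_sum hηbound
      _ = G/H * ∑ t ∈ Finset.Icc 1 T, (1:ℝ)/(t:ℝ) := by rw [Finset.mul_sum]
      _ ≤ G/H * (1 + Real.log T) := by
          apply mul_le_mul_of_nonneg_left (my_harmonic_le_one_add_log T hT)
          positivity
  -- relate log T and log B
  have hT1 : (1:ℝ) ≤ (T:ℝ) := by exact_mod_cast hT
  have hTB : (T:ℝ) ≤ ∑ t ∈ Finset.Icc 1 T, G/‖g t‖ := by
    have h1 : (T:ℝ) = ∑ _t ∈ Finset.Icc 1 T, (1:ℝ) := by
      rw [Finset.sum_const, Nat.card_Icc]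
      simp
    rw [h1]
    apply Finset.sum_le_sum
    intro i hi
    exact (one_le_div (hgpos i hi)).mpr (hgle i hi)
  have hlogT : Real.log T ≤ Real.log (∑ t ∈ Finset.Icc 1 T, G/‖g t‖) := by
    apply Real.log_le_log (by linarith) hTB
  have hlog0 : 0 ≤ Real.log T := Real.log_nonneg hT1
  -- final chain
  have hfin1 : (∑ t ∈ Finset.Icc 1 T, η t) * β ≤ G/H * (1 + Real.log T) * β :=
    mul_le_mul_of_nonneg_right hηsum (le_of_lt hβ)
  have hfin2 : G/H * (1 + Real.log T) * β
      ≤ G/H * (1 + Real.log (∑ t ∈ Finset.Icc 1 T, G/‖g t‖)) * β := by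
    apply mul_le_mul_of_nonneg_right _ (le_of_lt hβ)
    apply mul_le_mul_of_nonneg_left (by linarith) (by positivity)
  have hring : G/H * (1 + Real.log (∑ t ∈ Finset.Icc 1 T, G/‖g t‖)) * β
      = (β / H) * G * (1 + Real.log (∑ t ∈ Finset.Icc 1 T, G/‖g t‖)) := by
    ring
  linarith [hsum1, hfin1, hfin2, hring.le, hring.ge]
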